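/- Scaling-up of Pólya noise under dropouts: if only (1−δ)·n of n clients each contribute independent (X_i − Y_i) with X_i, Y_i ~ Pólya(1/((1−δ)n), β) independently, then the sum of the surviving clients' noise shares is distributed as the discrete Laplace distribution P(Z = k) = ((1−β)/(1+β))·β^{|k|}. -/

import Mathlib

open MeasureTheory

/-- Pólya(α, β) pmf at k ∈ ℕ. -/
noncomputable def polyaPMF (α β : ℝ) (k : ℕ) : ℝ :=
  (Real.Gamma (α + k) / (Real.Gamma α * (Nat.factorial k))) * β ^ k * (1 - β) ^ α

open Finset in
private noncomputable def rr (a : ℝ) (k : ℕ) : ℝ :=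
  (∏ j ∈ Finset.range k, (a + j)) / k.factorial

private lemma rr_zero_left (m : ℕ) : rr 0 m = if m = 0 then 1 else 0 := by
  cases m with
  | zero => simp [rr]
  | succ m =>
    simp only [rr, Nat.succ_ne_zero, if_false]
    rw [Finset.prod_eq_zero (Finset.mem_range.mpr (Nat.succ_pos m))]
    · simp
    · simp

private lemma rr_succ_mul (a : ℝ) (k : ℕ) : ((k:ℝ)+1) * rr a (k+1) = (a + k) * rr a k := by
  have h : ((k+1).factorial : ℝ) ≠ 0 := by positivity
  have h2 : ((k).factorial : ℝ) ≠ 0 := by positivity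
  simp only [rr, Finset.prod_range_succ, Nat.factorial_succ]
  push_cast
  field_simp

private lemma rr_vand (a b : ℝ) (m : ℕ) :
    ∑ j ∈ Finset.range (m+1), rr a j * rr b (m - j) = rr (a+b) m := by
  induction m with
  | zero => simp [rr]
  | succ m ih =>
    have hm1 : ((m:ℝ)+1) ≠ 0 := by positivity
    have key : ((m:ℝ)+1) * ∑ j ∈ Finset.range (m+2), rr a j * rr b (m+1-j)
        = (a+b+(m:ℝ)) * ∑ j ∈ Finset.range (m+1), rr a j * rr b (m - j) := by
      rw [Finset.mul_sum]
      have split : ∀ j ∈ Finset.range (m+2),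
          ((m:ℝ)+1) * (rr a j * rr b (m+1-j))
          = (j:ℝ) * rr a j * rr b (m+1-j) + ((m+1-j : ℕ):ℝ) * rr a j * rr b (m+1-j) := by
        intro j hj
        have hj' : j ≤ m+1 := by
          have := Finset.mem_range.mp hj; omega
        have hc : ((m+1-j : ℕ):ℝ) = (m:ℝ) + 1 - (j:ℝ) := by
          rw [Nat.cast_sub hj']; push_cast; ring
        rw [hc]; ring
      rw [Finset.sum_congr rfl split, Finset.sum_add_distrib]
      have hS1 : ∑ j ∈ Finset.range (m+2), (j:ℝ) * rr a j * rr b (m+1-j)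
          = ∑ j ∈ Finset.range (m+1), (a + (j:ℝ)) * rr a j * rr b (m-j) := by
        rw [Finset.sum_range_succ']
        simp only [Nat.cast_zero, zero_mul, add_zero]
        apply Finset.sum_congr rfl
        intro j hj
        have h1 : m + 1 - (j+1) = m - j := by omega
        have h2 := rr_succ_mul a j
        rw [h1]
        push_cast
        linear_combination rr b (m-j) * h2
      have hS2 : ∑ j ∈ Finset.range (m+2), ((m+1-j : ℕ):ℝ) * rr a j * rr b (m+1-j)
          = ∑ j ∈ Finset.range (m+1), (b + ((m-j : ℕ):ℝ)) * rr a j * rr b (m-j) := by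
        rw [Finset.sum_range_succ]
        simp only [Nat.sub_self, Nat.cast_zero, zero_mul, add_zero]
        apply Finset.sum_congr rfl
        intro j hj
        have hj' : j ≤ m := by
          have := Finset.mem_range.mp hj; omega
        have h1 : m + 1 - j = (m - j) + 1 := by omega
        have h2 := rr_succ_mul b (m-j)
        rw [h1]
        push_cast
        linear_combination rr a j * h2
      rw [hS1, hS2, ← Finset.sum_add_distrib, Finset.mul_sum]
      apply Finset.sum_congr rfl
      intro j hj
      have hj' : j ≤ m := by
        have := Finset.mem_range.mp hj; omega
      have hc : ((m-j : ℕ):ℝ) = (m:ℝ) - (j:ℝ) := by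
        rw [Nat.cast_sub hj']
      rw [hc]; ring
    have h2 := rr_succ_mul (a+b) m
    apply mul_left_cancel₀ hm1
    rw [h2]
    calc ((m:ℝ)+1) * ∑ j ∈ Finset.range (m+1+1), rr a j * rr b (m+1-j)
        = (a+b+(m:ℝ)) * ∑ j ∈ Finset.range (m+1), rr a j * rr b (m - j) := key
      _ = (a + b + (m:ℝ)) * rr (a+b) m := by rw [ih]

private lemma rr_vand' (a b : ℝ) (m : ℕ) :
    ∑ p ∈ Finset.HasAntidiagonal.antidiagonal m, rr a p.1 * rr b p.2 = rr (a+b) m := by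
  rw [Finset.Nat.sum_antidiagonal_eq_sum_range_succ_mk]
  exact rr_vand a b m

open Finset in
private lemma rr_vand_pi {ι : Type*} [DecidableEq ι] (a : ℝ) (t : Finset ι) (m : ℕ) :
    ∑ x ∈ t.piAntidiag m, ∏ i ∈ t, rr a (x i) = rr (t.card * a) m := by
  induction t using Finset.cons_induction generalizing m with
  | empty =>
    rw [Finset.piAntidiag_empty]
    simp [rr_zero_left]
    split <;> simp_all [rr_zero_left]
  | cons i s hi ih =>
    rw [Finset.piAntidiag_cons hi, Finset.sum_disjiUnion]
    have inner : ∀ p ∈ Finset.HasAntidiagonal.antidiagonal m,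
        ∑ x ∈ (Finset.piAntidiag s p.2).map
          (addRightEmbedding fun t => if t = i then p.1 else 0),
          ∏ j ∈ Finset.cons i s hi, rr a (x j)
        = rr a p.1 * rr ((s.card : ℝ) * a) p.2 := by
      intro p hp
      rw [Finset.sum_map]
      have : ∀ g ∈ Finset.piAntidiag s p.2,
          ∏ j ∈ Finset.cons i s hi,
            rr a ((addRightEmbedding fun t => if t = i then p.1 else 0) g j)
          = rr a p.1 * ∏ j ∈ s, rr a (g j) := by
        intro g hg
        rw [Finset.prod_cons]
        have hgi : g i = 0 := by
          by_contra h
          exact hi ((Finset.mem_piAntidiag.mp hg).2 i h)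
        congr 1
        · simp [addRightEmbedding, hgi]
        · apply Finset.prod_congr rfl
          intro j hj
          have : j ≠ i := fun h => hi (h ▸ hj)
          simp [addRightEmbedding, this]
      rw [Finset.sum_congr rfl this, ← Finset.mul_sum, ih]
    rw [Finset.sum_congr rfl inner]
    rw [rr_vand' a ((s.card : ℝ) * a) m]
    congr 1
    rw [Finset.card_cons]
    push_cast
    ring

private lemma Gamma_ratio (a : ℝ) (ha : 0 < a) (k : ℕ) :
    Real.Gamma (a + k) = Real.Gamma a * ∏ j ∈ Finset.range k, (a + j) := by
  induction k with
  | zero => simp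
  | succ k ih =>
    have hne : a + (k:ℝ) ≠ 0 := by positivity
    have : a + ((k:ℕ)+1 : ℕ) = (a + k) + 1 := by push_cast; ring
    rw [this, Real.Gamma_add_one hne, ih, Finset.prod_range_succ]
    ring

private lemma polyaPMF_eq_rr (a β : ℝ) (ha : 0 < a) (k : ℕ) :
    polyaPMF a β k = rr a k * β ^ k * (1 - β) ^ a := by
  have hG : Real.Gamma a ≠ 0 := (Real.Gamma_pos_of_pos ha).ne'
  rw [polyaPMF, Gamma_ratio a ha k, rr]
  field_simp

private lemma polyaPMF_nonneg (a β : ℝ) (ha : 0 < a) (hβ : β ∈ Set.Ioo (0:ℝ) 1) (k : ℕ) :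
    0 ≤ polyaPMF a β k := by
  obtain ⟨h0, h1⟩ := hβ
  have hb : (0:ℝ) < 1 - β := by linarith
  have h2 : 0 < Real.Gamma (a + k) := Real.Gamma_pos_of_pos (by positivity)
  have h3 : 0 < Real.Gamma a := Real.Gamma_pos_of_pos ha
  have h4 : (0:ℝ) < (k.factorial : ℝ) := by positivity
  have h5 := Real.rpow_pos_of_pos hb a
  have h6 : (0:ℝ) ≤ β ^ k := by positivity
  unfold polyaPMF
  positivity

private lemma rr_one (m : ℕ) : rr 1 m = 1 := by
  have : (∏ j ∈ Finset.range m, ((1:ℝ) + j)) = (m.factorial : ℝ) := by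
    rw [← Finset.prod_range_add_one_eq_factorial]
    push_cast
    apply Finset.prod_congr rfl
    intro j _
    ring
  rw [rr, this]
  field_simp

private lemma Q_eq (s : ℕ) (a β : ℝ) (ha : 0 < a) (hsum : (s:ℝ) * a = 1)
    (hβ : β ∈ Set.Ioo (0:ℝ) 1) (m : ℕ) :
    ∑ x ∈ (Finset.univ : Finset (Fin s)).piAntidiag m, ∏ i, polyaPMF a β (x i)
      = (1-β) * β^m := by
  have h1b : (0:ℝ) ≤ 1 - β := by linarith [hβ.2]
  have step : ∀ x ∈ (Finset.univ : Finset (Fin s)).piAntidiag m,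
      ∏ i, polyaPMF a β (x i)
        = (∏ i, rr a (x i)) * (β ^ m * ((1-β) ^ a) ^ s) := by
    intro x hx
    have hxm : ∑ i, x i = m := (Finset.mem_piAntidiag.mp hx).1
    calc ∏ i, polyaPMF a β (x i)
        = ∏ i, (rr a (x i) * β ^ (x i) * (1-β) ^ a) := by
          exact Finset.prod_congr rfl fun i _ => polyaPMF_eq_rr a β ha (x i)
      _ = (∏ i, rr a (x i)) * (∏ i, β ^ (x i)) * (∏ (_ : Fin s), (1-β) ^ a) := by
          rw [← Finset.prod_mul_distrib, ← Finset.prod_mul_distrib]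
      _ = (∏ i, rr a (x i)) * (β ^ m * ((1-β) ^ a) ^ s) := by
          rw [Finset.prod_pow_eq_pow_sum, hxm, Finset.prod_const]
          simp [mul_assoc]
  rw [Finset.sum_congr rfl step, ← Finset.sum_mul, rr_vand_pi]
  have hcard : (((Finset.univ : Finset (Fin s)).card : ℝ)) * a = 1 := by
    simpa using hsum
  rw [hcard, rr_one, one_mul]
  have : ((1-β) ^ a) ^ s = (1-β) := by
    rw [← Real.rpow_natCast ((1-β)^a) s, ← Real.rpow_mul h1b]
    rw [show a * (s:ℝ) = 1 by rw [mul_comm]; exact hsum, Real.rpow_one]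
  rw [this]
  ring

private lemma meas_B {Ω : Type*} [MeasurableSpace Ω] (μ : Measure Ω)
    (s : ℕ) (X Y : Fin s → Ω → ℕ)
    (hmeas : ∀ i, Measurable (X i) ∧ Measurable (Y i))
    (hindep : ProbabilityTheory.iIndepFun
      (fun p : Fin s × Bool => if p.2 then X p.1 else Y p.1) μ)
    (pm : ℕ → ENNReal)
    (hX : ∀ i (k : ℕ), μ {ω | X i ω = k} = pm k)
    (hY : ∀ i (k : ℕ), μ {ω | Y i ω = k} = pm k)
    (m u : ℕ) :
    μ {ω | (∑ i, X i ω) = m ∧ (∑ i, Y i ω) = u}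
      = (∑ x ∈ (Finset.univ : Finset (Fin s)).piAntidiag m, ∏ i, pm (x i))
        * (∑ y ∈ (Finset.univ : Finset (Fin s)).piAntidiag u, ∏ i, pm (y i)) := by
  classical
  set Z : Fin s × Bool → Ω → ℕ := fun p => if p.2 then X p.1 else Y p.1 with hZ
  set A : (Fin s → ℕ) × (Fin s → ℕ) → Set Ω :=
    fun xy => {ω | (∀ i, X i ω = xy.1 i) ∧ (∀ i, Y i ω = xy.2 i)} with hA
  have hAmeas : ∀ xy, MeasurableSet (A xy) := by
    intro ⟨x, y⟩
    have h1 : A (x, y) = (⋂ i, X i ⁻¹' {x i}) ∩ ⋂ i, Y i ⁻¹' {y i} := by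
      ext ω; simp [hA, Set.mem_iInter, Set.mem_preimage]
    rw [h1]
    exact MeasurableSet.inter
      (MeasurableSet.iInter fun i => (hmeas i).1 (measurableSet_singleton _))
      (MeasurableSet.iInter fun i => (hmeas i).2 (measurableSet_singleton _))
  have hAmeasure : ∀ x y, μ (A (x, y)) = (∏ i, pm (x i)) * (∏ i, pm (y i)) := by
    intro x y
    have h1 : A (x, y) = ⋂ p : Fin s × Bool, Z p ⁻¹' {if p.2 then x p.1 else y p.1} := by
      ext ω
      constructor
      · rintro ⟨h1, h2⟩
        simp only [Set.mem_iInter, Set.mem_preimage]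
        rintro ⟨i, b⟩
        cases b <;> simp [hZ, h1 i, h2 i]
      · intro h
        simp only [Set.mem_iInter, Set.mem_preimage] at h
        constructor
        · intro i; have := h (i, true); simpa [hZ] using this
        · intro i; have := h (i, false); simpa [hZ] using this
    rw [h1, hindep.meas_iInter (fun p => ⟨{if p.2 then x p.1 else y p.1},
      measurableSet_singleton _, rfl⟩)]
    rw [Fintype.prod_prod_type]
    have : ∀ i : Fin s, ∏ b : Bool, μ (Z (i, b) ⁻¹' {if b then x i else y i})
        = pm (x i) * pm (y i) := by
      intro i
      rw [Fintype.prod_bool]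
      have e1 : Z (i, true) ⁻¹' {x i} = {ω | X i ω = x i} := by
        ext ω; simp [hZ]
      have e2 : Z (i, false) ⁻¹' {y i} = {ω | Y i ω = y i} := by
        ext ω; simp [hZ]
      simp only [if_true, if_neg (by simp : ¬(false = true)), e1, e2, hX, hY]
    rw [Finset.prod_congr rfl fun i _ => this i, Finset.prod_mul_distrib]
  have hdecomp : {ω | (∑ i, X i ω) = m ∧ (∑ i, Y i ω) = u}
      = ⋃ xy ∈ ((Finset.univ : Finset (Fin s)).piAntidiag m ×ˢ
          (Finset.univ : Finset (Fin s)).piAntidiag u), A xy := by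
    ext ω
    simp only [Set.mem_iUnion, Set.mem_setOf_eq, Finset.mem_product]
    constructor
    · rintro ⟨h1, h2⟩
      refine ⟨(fun i => X i ω, fun i => Y i ω), ⟨?_, ?_⟩, ?_⟩
      · rw [Finset.mem_piAntidiag]; exact ⟨h1, fun i _ => Finset.mem_univ i⟩
      · rw [Finset.mem_piAntidiag]; exact ⟨h2, fun i _ => Finset.mem_univ i⟩
      · exact ⟨fun i => rfl, fun i => rfl⟩
    · rintro ⟨⟨x, y⟩, ⟨hx, hy⟩, hω1, hω2⟩
      have hx' := (Finset.mem_piAntidiag.mp hx).1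
      have hy' := (Finset.mem_piAntidiag.mp hy).1
      constructor
      · rw [← hx']; exact Finset.sum_congr rfl fun i _ => hω1 i
      · rw [← hy']; exact Finset.sum_congr rfl fun i _ => hω2 i
  have hdisj : Set.PairwiseDisjoint
      ↑((Finset.univ : Finset (Fin s)).piAntidiag m ×ˢ
        (Finset.univ : Finset (Fin s)).piAntidiag u) A := by
    rintro ⟨x, y⟩ _ ⟨x', y'⟩ _ hne
    simp only [Function.onFun, Set.disjoint_left]
    rintro ω ⟨h1, h2⟩ ⟨h1', h2'⟩
    apply hne
    have hx : x = x' := funext fun i => (h1 i).symm.trans (h1' i)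
    have hy : y = y' := funext fun i => (h2 i).symm.trans (h2' i)
    rw [hx, hy]
  rw [hdecomp, measure_biUnion_finset hdisj (fun xy _ => hAmeas xy)]
  rw [Finset.sum_product]
  rw [Finset.sum_mul_sum]
  exact Finset.sum_congr rfl fun x _ => Finset.sum_congr rfl fun y _ => hAmeasure x y

private lemma geom_sum_laplace (β : ℝ) (hβ : β ∈ Set.Ioo (0:ℝ) 1) (K : ℕ) :
    ∑' (i:ℕ), ENNReal.ofReal ((1-β)*β^(i+K)) * ENNReal.ofReal ((1-β)*β^i)
      = ENNReal.ofReal ((1-β)/(1+β) * β^K) := by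
  obtain ⟨h0, h1⟩ := hβ
  have h1b : (0:ℝ) < 1 - β := by linarith
  have hterm : ∀ i : ℕ, ENNReal.ofReal ((1-β)*β^(i+K)) * ENNReal.ofReal ((1-β)*β^i)
      = ENNReal.ofReal ((1-β)^2 * β^K * (β^2)^i) := by
    intro i
    rw [← ENNReal.ofReal_mul (by positivity)]
    congr 1
    rw [pow_add]
    ring
  rw [tsum_congr hterm]
  have hq : β^2 < 1 := by nlinarith
  have hsummable : Summable (fun i : ℕ => (1-β)^2 * β^K * (β^2)^i) :=
    (summable_geometric_of_lt_one (by positivity) hq).mul_left _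
  rw [← ENNReal.ofReal_tsum_of_nonneg (fun i => by positivity) hsummable]
  congr 1
  rw [tsum_mul_left, tsum_geometric_of_lt_one (by positivity) hq]
  have hne : 1 - β^2 ≠ 0 := by nlinarith
  have hne2 : (1:ℝ) + β ≠ 0 := by positivity
  field_simp
  ring

/-- Scaling-up of Pólya noise under dropouts: if only (1−δ)·n of n clients survive
(with s = (1−δ)·n a positive integer), and each surviving client i contributes
X_i − Y_i with X_i, Y_i mutually independent Pólya(1/((1−δ)n), β), then the sum of the
surviving clients' noise shares is discrete Laplace:
P(Z = k) = ((1−β)/(1+β))·β^{|k|}. -/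
theorem stmt12 {Ω : Type*} [MeasurableSpace Ω] (μ : Measure Ω) [IsProbabilityMeasure μ]
    (n : ℕ) (hn : 0 < n) (δ : ℝ) (hδ : δ ∈ Set.Ico (0 : ℝ) 1)
    (s : ℕ) (hs : 0 < s) (hsn : (s : ℝ) = (1 - δ) * n)
    (β : ℝ) (hβ : β ∈ Set.Ioo (0 : ℝ) 1)
    (X Y : Fin s → Ω → ℕ)
    (hmeas : ∀ i, Measurable (X i) ∧ Measurable (Y i))
    (hindep : ProbabilityTheory.iIndepFun
      (fun p : Fin s × Bool => if p.2 then X p.1 else Y p.1) μ)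
    (hX : ∀ i (k : ℕ), μ {ω | X i ω = k} = ENNReal.ofReal (polyaPMF (1 / ((1 - δ) * n)) β k))
    (hY : ∀ i (k : ℕ), μ {ω | Y i ω = k} = ENNReal.ofReal (polyaPMF (1 / ((1 - δ) * n)) β k)) :
    ∀ k : ℤ, μ {ω | (∑ i, ((X i ω : ℤ) - (Y i ω : ℤ))) = k}
      = ENNReal.ofReal (((1 - β) / (1 + β)) * β ^ k.natAbs) := by
  classical
  intro k
  set a : ℝ := 1 / ((1 - δ) * n) with ha_def
  have hsr : (0:ℝ) < s := by exact_mod_cast hs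
  have ha_pos : 0 < a := by
    rw [ha_def, ← hsn]; positivity
  have hsa : (s:ℝ) * a = 1 := by
    rw [ha_def, ← hsn]
    field_simp
  set pm : ℕ → ENNReal := fun q => ENNReal.ofReal (polyaPMF a β q) with hpm
  -- Q values
  have hQ : ∀ m : ℕ, (∑ x ∈ (Finset.univ : Finset (Fin s)).piAntidiag m, ∏ i, pm (x i))
      = ENNReal.ofReal ((1-β) * β^m) := by
    intro m
    rw [← Q_eq s a β ha_pos hsa hβ m]
    rw [ENNReal.ofReal_sum_of_nonneg (fun x _ => Finset.prod_nonneg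
      (fun i _ => polyaPMF_nonneg a β ha_pos hβ (x i)))]
    refine Finset.sum_congr rfl fun x _ => ?_
    rw [← ENNReal.ofReal_prod_of_nonneg (fun i _ => polyaPMF_nonneg a β ha_pos hβ (x i))]
  -- event decomposition
  set C : ℕ → Set Ω := fun u =>
    {ω | (∑ i, ((X i ω : ℤ) - (Y i ω : ℤ))) = k ∧ (∑ i, Y i ω) = u} with hC
  have hsplit : ∀ ω : Ω, (∑ i, ((X i ω : ℤ) - (Y i ω : ℤ)))
      = ((∑ i, X i ω : ℕ) : ℤ) - ((∑ i, Y i ω : ℕ) : ℤ) := by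
    intro ω
    push_cast
    rw [Finset.sum_sub_distrib]
  have hmeasE : ∀ m : ℤ, MeasurableSet {ω | (∑ i, ((X i ω : ℤ) - (Y i ω : ℤ))) = m} := by
    intro m
    have : Measurable (fun ω => ∑ i, ((X i ω : ℤ) - (Y i ω : ℤ))) := by
      apply Finset.measurable_sum
      intro i _
      exact Measurable.sub (measurable_from_top.comp (hmeas i).1)
        (measurable_from_top.comp (hmeas i).2)
    exact this (measurableSet_singleton m)
  have hmeasY : Measurable (fun ω => ∑ i, Y i ω) :=
    Finset.measurable_sum _ (fun i _ => (hmeas i).2)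
  have hCmeas : ∀ u, MeasurableSet (C u) := by
    intro u
    exact (hmeasE k).inter (hmeasY (measurableSet_singleton u))
  have hCdisj : Pairwise (Function.onFun Disjoint C) := by
    intro u v huv
    simp only [Function.onFun, Set.disjoint_left, hC]
    rintro ω ⟨_, h2⟩ ⟨_, h4⟩
    exact huv (h2 ▸ h4 ▸ rfl)
  have hUnion : {ω | (∑ i, ((X i ω : ℤ) - (Y i ω : ℤ))) = k} = ⋃ u, C u := by
    ext ω
    simp only [Set.mem_iUnion, hC, Set.mem_setOf_eq]
    constructor
    · intro h; exact ⟨∑ i, Y i ω, h, rfl⟩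
    · rintro ⟨u, h, _⟩; exact h
  rw [hUnion, measure_iUnion hCdisj hCmeas]
  -- compute μ (C u)
  have hCval : ∀ u : ℕ, μ (C u) =
      if 0 ≤ k + u then ENNReal.ofReal ((1-β) * β^((k+u).toNat)) * ENNReal.ofReal ((1-β) * β^u)
      else 0 := by
    intro u
    by_cases h : 0 ≤ k + (u:ℤ)
    · rw [if_pos h]
      have hCeq : C u = {ω | (∑ i, X i ω) = (k+u).toNat ∧ (∑ i, Y i ω) = u} := by
        ext ω
        simp only [hC, Set.mem_setOf_eq, hsplit ω]
        omega
      rw [hCeq, meas_B μ s X Y hmeas hindep pm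
        (by intro i q; rw [hX i q]) (by intro i q; rw [hY i q]), hQ, hQ]
    · rw [if_neg h]
      have hCeq : C u = ∅ := by
        ext ω
        simp only [hC, Set.mem_setOf_eq, hsplit ω, Set.mem_empty_iff_false, iff_false]
        omega
      rw [hCeq, measure_empty]
  rw [tsum_congr hCval]
  -- split on sign of k
  rcases Int.eq_nat_or_neg k with ⟨K, rfl | rfl⟩
  · have hterm : ∀ u : ℕ, (if 0 ≤ (K:ℤ) + u then
        ENNReal.ofReal ((1-β) * β^(((K:ℤ)+u).toNat)) * ENNReal.ofReal ((1-β) * β^u) else 0)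
        = ENNReal.ofReal ((1-β)*β^(u+K)) * ENNReal.ofReal ((1-β)*β^u) := by
      intro u
      rw [if_pos (by positivity : (0:ℤ) ≤ (K:ℤ) + (u:ℤ)),
        show (((K:ℤ)+(u:ℤ)).toNat) = u + K from by omega]
    rw [tsum_congr hterm, geom_sum_laplace β hβ K]
    simp
  · have hterm : ∀ i : ℕ, (if 0 ≤ -(K:ℤ) + ((i+K:ℕ):ℤ) then
        ENNReal.ofReal ((1-β) * β^((-(K:ℤ)+((i+K:ℕ):ℤ)).toNat)) * ENNReal.ofReal ((1-β) * β^(i+K)) else 0)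
        = ENNReal.ofReal ((1-β)*β^(i+K)) * ENNReal.ofReal ((1-β)*β^i) := by
      intro i
      rw [if_pos (by push_cast; omega : (0:ℤ) ≤ -(K:ℤ) + ((i+K:ℕ):ℤ)),
        show ((-(K:ℤ)+((i+K:ℕ):ℤ)).toNat) = i from by push_cast; omega, mul_comm]
    set f : ℕ → ENNReal := fun u => if 0 ≤ -(K:ℤ) + u then
        ENNReal.ofReal ((1-β) * β^((-(K:ℤ)+u).toNat)) * ENNReal.ofReal ((1-β) * β^u) else 0 with hf
    have hshift : (∑ i ∈ Finset.range K, f i) + ∑' i, f (i + K) = ∑' u, f u :=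
      Summable.sum_add_tsum_nat_add' ENNReal.summable
    have hzero : (∑ i ∈ Finset.range K, f i) = 0 := by
      apply Finset.sum_eq_zero
      intro i hi
      have hiK := Finset.mem_range.mp hi
      rw [hf]
      simp only
      rw [if_neg (by omega)]
    have : ∑' u, f u = ∑' i, f (i + K) := by rw [← hshift, hzero, zero_add]
    rw [this]
    have : ∀ i : ℕ, f (i + K) = ENNReal.ofReal ((1-β)*β^(i+K)) * ENNReal.ofReal ((1-β)*β^i) := by
      intro i
      rw [hf]
      exact hterm i
    rw [tsum_congr this, geom_sum_laplace β hβ K]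
    simp
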